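/- Let ρ be a Borel probability measure on ℝ, ω ∈ ℝ, and γ ∈ ℝ such that Z = ∫ exp(γ·(y − ω)₊) dρ(y) < ∞. Let μ_γ be the exponentially tilted measure with density (1/Z)·exp(γ·(y − ω)₊) with respect to ρ, and suppose ∫ (y − ω)₊ dμ_γ(y) = f̄. Then for every Borel probability measure μ on ℝ absolutely continuous with respect to ρ with ∫ (y − ω)₊ dμ(y) = f̄ and KL(μ ‖ ρ) < ∞, one has KL(μ_γ ‖ ρ) ≤ KL(μ ‖ ρ). That is, the tilted density p_μ(y) proportional to p_ρ(y)·e^{γ(y−ω)} for y > ω and to p_ρ(y) for y ≤ ω minimizes KL divergence to ρ subject to a single call-option (ReLU) expectation constraint. -/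
import Mathlib


open MeasureTheory

/-- The Kullback–Leibler divergence `KL(μ ‖ ν) = ∫ log (dμ/dν) dμ`. -/
noncomputable def klDiv (μ ν : Measure ℝ) : ℝ :=
  ∫ x, Real.log ((μ.rnDeriv ν x).toReal) ∂μ

/-- Gibbs' inequality: the integral of the log-likelihood ratio is nonnegative. -/
lemma gibbs_nonneg {α : Type*} {mα : MeasurableSpace α} (μ ν : Measure α)
    [IsProbabilityMeasure μ] [IsProbabilityMeasure ν] (hμν : μ ≪ ν)
    (h_int : Integrable (llr μ ν) μ) : 0 ≤ ∫ x, llr μ ν x ∂μ := by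
  have h_pos : ∀ᵐ x ∂μ, 0 < ((μ.rnDeriv ν x).toReal) := by
    filter_upwards [Measure.rnDeriv_pos hμν, hμν.ae_le (Measure.rnDeriv_lt_top μ ν)]
      with x h1 h2
    exact ENNReal.toReal_pos h1.ne' h2.ne
  set r : α → ℝ := fun x => ((μ.rnDeriv ν x).toReal) with hr
  have hbound : ∀ᵐ x ∂μ, 1 - llr μ ν x ≤ (r x)⁻¹ := by
    filter_upwards [h_pos] with x hx
    have := Real.one_sub_inv_le_log_of_pos hx
    rw [llr_def]; linarith
  set h : α → ℝ := fun x => max (1 - llr μ ν x) 0 with hh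
  have h_int0 : Integrable (fun x => 1 - llr μ ν x) μ := (integrable_const (1:ℝ)).sub h_int
  have h_int' : Integrable h μ := h_int0.pos_part
  have h_nonneg : 0 ≤ h := fun x => le_max_right _ _
  have hbound' : ∀ᵐ x ∂μ, h x ≤ (r x)⁻¹ := by
    filter_upwards [hbound, h_pos] with x hx hxp
    exact max_le hx (inv_nonneg.2 hxp.le)
  have hlint : ∫⁻ x, ENNReal.ofReal ((r x)⁻¹) ∂μ ≤ 1 := by
    have hmeas : Measurable fun x => ENNReal.ofReal ((r x)⁻¹) :=
      ((Measure.measurable_rnDeriv μ ν).ennreal_toReal.inv).ennreal_ofReal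
    conv_lhs => rw [← Measure.withDensity_rnDeriv_eq μ ν hμν]
    rw [lintegral_withDensity_eq_lintegral_mul ν (Measure.measurable_rnDeriv μ ν) hmeas]
    calc ∫⁻ x, (μ.rnDeriv ν x) * ENNReal.ofReal ((r x)⁻¹) ∂ν
        ≤ ∫⁻ _, 1 ∂ν := by
          refine lintegral_mono_ae ?_
          filter_upwards [Measure.rnDeriv_lt_top μ ν] with x hx
          rcases eq_or_ne (μ.rnDeriv ν x) 0 with h0 | h0
          · simp [h0]
          · have hxp : 0 < r x :=
              ENNReal.toReal_pos h0 hx.ne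
            have heq : ENNReal.ofReal ((r x)⁻¹) = (μ.rnDeriv ν x)⁻¹ := by
              rw [ENNReal.ofReal_inv_of_pos hxp]
              congr 1
              exact ENNReal.ofReal_toReal hx.ne
            rw [heq, ENNReal.mul_inv_cancel h0 hx.ne]
      _ = 1 := by simp
  have h1 : ∫ x, (1 - llr μ ν x) ∂μ ≤ ∫ x, h x ∂μ :=
    integral_mono h_int0 h_int' (fun x => le_max_left _ _)
  have h2 : ∫ x, h x ∂μ ≤ 1 := by
    rw [integral_eq_lintegral_of_nonneg_ae (Filter.Eventually.of_forall h_nonneg) h_int'.1]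
    have hle : ∫⁻ x, ENNReal.ofReal (h x) ∂μ ≤ 1 := by
      refine le_trans (lintegral_mono_ae ?_) hlint
      filter_upwards [hbound'] with x hx
      exact ENNReal.ofReal_le_ofReal hx
    calc (∫⁻ x, ENNReal.ofReal (h x) ∂μ).toReal ≤ (1 : ENNReal).toReal :=
          ENNReal.toReal_mono (by simp) hle
      _ = 1 := by simp
  have h3 : ∫ x, (1 - llr μ ν x) ∂μ = 1 - ∫ x, llr μ ν x ∂μ := by
    rw [integral_sub (integrable_const _) h_int]
    simp
  linarith

/-- **The exponentially tilted measure minimizes KL divergence under a single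
ReLU (call-option) expectation constraint.** -/
theorem stmt_4 (ρ : Measure ℝ) [IsProbabilityMeasure ρ] (ω γ fbar : ℝ)
    (hZ : Integrable (fun y => Real.exp (γ * max (y - ω) 0)) ρ)
    (hcal : ∫ y, max (y - ω) 0 ∂(ρ.tilted (fun y => γ * max (y - ω) 0)) = fbar) :
    ∀ μ : Measure ℝ, IsProbabilityMeasure μ → μ ≪ ρ →
      (∫ y, max (y - ω) 0 ∂μ) = fbar →
      Integrable (fun x => Real.log ((μ.rnDeriv ρ x).toReal)) μ →
      klDiv (ρ.tilted (fun y => γ * max (y - ω) 0)) ρ ≤ klDiv μ ρ := by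
  intro μ hμprob hμρ hμcal h_int
  set g : ℝ → ℝ := fun y => γ * max (y - ω) 0 with hg
  set μγ : Measure ℝ := ρ.tilted g with hμγ
  have hZ' : Integrable (fun x => Real.exp (g x)) ρ := hZ
  have hprobγ : IsProbabilityMeasure μγ := isProbabilityMeasure_tilted hZ'
  have hγρ : μγ ≪ ρ := tilted_absolutelyContinuous ρ g
  have hργ : ρ ≪ μγ := absolutelyContinuous_tilted hZ'
  have h_int_llr : Integrable (llr μ ρ) μ := h_int
  have hklμ : klDiv μ ρ = ∫ x, llr μ ρ x ∂μ := rfl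
  have h_log : (fun x => Real.log ((μγ.rnDeriv ρ x).toReal))
      =ᵐ[μγ] fun x => g x - Real.log (∫ x, Real.exp (g x) ∂ρ) :=
    hγρ.ae_le (log_rnDeriv_tilted_left_self hZ')
  have hklγ : klDiv μγ ρ = ∫ x, (g x - Real.log (∫ x, Real.exp (g x) ∂ρ)) ∂μγ :=
    integral_congr_ae h_log
  by_cases hγ0 : γ = 0
  · -- γ = 0 : klDiv μγ ρ = 0
    have hg0 : ∀ x, g x = 0 := by intro x; simp [hg, hγ0]
    have hZ1 : (∫ x, Real.exp (g x) ∂ρ) = 1 := by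
      simp only [hg0, Real.exp_zero]
      simp
    have h0 : klDiv μγ ρ = 0 := by
      rw [hklγ]
      simp only [hg0, hZ1, Real.log_one, zero_sub, neg_zero]
      simp
    rw [h0, hklμ]
    exact gibbs_nonneg μ ρ hμρ h_int_llr
  by_cases hRγ : Integrable (fun y => max (y - ω) 0) μγ
  · by_cases hRμ : Integrable (fun y => max (y - ω) 0) μ
    · -- main case
      have hgμ : Integrable g μ := hRμ.const_mul γ
      have hgγ : Integrable g μγ := hRγ.const_mul γ
      have hintgγ : ∫ x, g x ∂μγ = γ * fbar := by
        rw [show (∫ x, g x ∂μγ) = ∫ x, γ * max (x - ω) 0 ∂μγ from rfl,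
          integral_const_mul, hcal]
      have hintgμ : ∫ x, g x ∂μ = γ * fbar := by
        rw [show (∫ x, g x ∂μ) = ∫ x, γ * max (x - ω) 0 ∂μ from rfl,
          integral_const_mul, hμcal]
      have hklγ' : klDiv μγ ρ = γ * fbar - Real.log (∫ x, Real.exp (g x) ∂ρ) := by
        rw [hklγ, integral_sub hgγ (integrable_const _), integral_const, hintgγ]
        simp
      have key : ∫ x, llr μ μγ x ∂μ
          = ∫ x, llr μ ρ x ∂μ - ∫ x, g x ∂μ + Real.log (∫ x, Real.exp (g x) ∂ρ) :=
        integral_llr_tilted_right hμρ hgμ hZ' h_int_llr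
      have hintc : Integrable (llr μ μγ) μ :=
        integrable_llr_tilted_right hμρ hgμ h_int_llr hZ'
      have hnn : 0 ≤ ∫ x, llr μ μγ x ∂μ :=
        gibbs_nonneg μ μγ (hμρ.trans hργ) hintc
      rw [key, hintgμ] at hnn
      rw [hklγ', hklμ]
      linarith
    · -- R not μ-integrable : contradiction
      exfalso
      have hf0 : fbar = 0 := by rw [← hμcal]; exact integral_undef hRμ
      have hRγ0 : ∫ y, max (y - ω) 0 ∂μγ = 0 := by rw [hcal, hf0]
      have hae : (fun y => max (y - ω) 0) =ᵐ[μγ] 0 :=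
        (integral_eq_zero_iff_of_nonneg (fun x => le_max_right _ _) hRγ).mp hRγ0
      have haeμ : (fun y => max (y - ω) 0) =ᵐ[μ] 0 := hμρ.ae_le (hργ.ae_le hae)
      exact hRμ ((integrable_zero _ _ _).congr haeμ.symm)
  · -- R not μγ-integrable : klDiv μγ ρ = 0
    have hgγ : ¬ Integrable g μγ := by
      intro hcontra
      have h2 := hcontra.const_mul γ⁻¹
      refine hRγ (h2.congr (Filter.Eventually.of_forall fun x => ?_))
      show γ⁻¹ * (γ * max (x - ω) 0) = max (x - ω) 0
      exact inv_mul_cancel_left₀ hγ0 _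
    have hnotint :
        ¬ Integrable (fun x => g x - Real.log (∫ x, Real.exp (g x) ∂ρ)) μγ := by
      intro hcontra
      have h2 := hcontra.add (integrable_const (Real.log (∫ x, Real.exp (g x) ∂ρ)))
      refine hgγ (h2.congr (Filter.Eventually.of_forall fun x => ?_))
      show g x - Real.log (∫ x, Real.exp (g x) ∂ρ) + Real.log (∫ x, Real.exp (g x) ∂ρ) = g x
      ring
    have h0 : klDiv μγ ρ = 0 := by rw [hklγ]; exact integral_undef hnotint
    rw [h0, hklμ]
    exact gibbs_nonneg μ ρ hμρ h_int_llr
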